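/- arXiv:2502.06547 — 7 statements merged into one kernel-verified Lean document; each statement's English description precedes it below -/
import Mathlib

section
/- Assume the compatibility condition Π_L Π_G = Π_G Π_L and that R is continuously differentiable. Then for every A ∈ E one has Π_L ∇R^aug(A) = 0 if and only if Π_E ∇R(A) = 0. In other words, the set of points in E that are stationary for the augmented dynamics A' = −Π_L ∇R^aug(A) coincides with the set of points in E that are stationary for the equivariant dynamics A' = −Π_E ∇R(A). -/
open MeasureTheory InnerProductSpace RealInnerProductSpace

noncomputable section

/-- The fixed-point subspace `H_G = {v : ρ(g) v = v for all g}` of an orthogonal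
representation `ρ : G → O(V)`. -/
def fixedSubmodule {G V : Type*} [Group G] [NormedAddCommGroup V] [InnerProductSpace ℝ V]
    (ρ : G →* (V ≃ₗᵢ[ℝ] V)) : Submodule ℝ V where
  carrier := {v | ∀ g : G, ρ g v = v}
  add_mem' := by
    intro a b ha hb g
    simp [map_add, ha g, hb g]
  zero_mem' := by
    intro g
    simp
  smul_mem' := by
    intro c a ha g
    rw [_root_.map_smul, ha g]

/-- The orthogonal projection onto a subspace `K`, as a map `V → V`. -/
def projSub {V : Type*} [NormedAddCommGroup V] [InnerProductSpace ℝ V] (K : Submodule ℝ V)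
    [K.HasOrthogonalProjection] : V →L[ℝ] V :=
  K.subtypeL.comp K.orthogonalProjectionOnto

/-- The augmented risk `R^aug(A) = ∫_G R(ρ(g) A) dμ(g)`. -/
def augRisk {G V : Type*} [Group G] [MeasurableSpace G]
    [NormedAddCommGroup V] [InnerProductSpace ℝ V]
    (μ : Measure G) (ρ : G →* (V ≃ₗᵢ[ℝ] V)) (R : V → ℝ) : V → ℝ :=
  fun A => ∫ g, R (ρ g A) ∂μ

/-- The Hessian of `f : V → ℝ` at `A`, regarded as a linear map `V → V`
(the derivative of the gradient field). -/
def hess {V : Type*} [NormedAddCommGroup V] [InnerProductSpace ℝ V] [CompleteSpace V]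
    (f : V → ℝ) (A : V) : V →L[ℝ] V :=
  fderiv ℝ (gradient f) A

section helpers

variable {G V : Type*} [Group G] [TopologicalSpace G] [IsTopologicalGroup G] [CompactSpace G]
    [MeasurableSpace G] [BorelSpace G]
    [NormedAddCommGroup V] [InnerProductSpace ℝ V] [FiniteDimensional ℝ V]
    (μ : Measure G) [μ.IsHaarMeasure] [IsProbabilityMeasure μ]
    (ρ : G →* (V ≃ₗᵢ[ℝ] V)) (hρ : Continuous fun p : G × V => ρ p.1 p.2)

include hρ in
lemma cont_apply (v : V) : Continuous fun g : G => ρ g v :=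
  hρ.comp (continuous_id.prodMk continuous_const)

include hρ in
lemma integrable_apply (v : V) : Integrable (fun g : G => ρ g v) μ :=
  (cont_apply ρ hρ v).integrable_of_hasCompactSupport
    (isCompact_univ.of_isClosed_subset (isClosed_tsupport _) (Set.subset_univ _))

include hρ in
lemma avg_eq_proj (v : V) : projSub (fixedSubmodule ρ) v = ∫ g, ρ g v ∂μ := by
  have hint := integrable_apply μ ρ hρ v
  have hmem : (∫ g, ρ g v ∂μ) ∈ fixedSubmodule ρ := by
    intro h
    have h1 : ρ h (∫ g, ρ g v ∂μ) = ∫ g, ρ h (ρ g v) ∂μ :=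
      ((ρ h).toLinearIsometry.integral_comp_comm (fun g => ρ g v)).symm
    have h2 : (∫ g, ρ h (ρ g v) ∂μ) = ∫ g, ρ (h * g) v ∂μ := by
      congr 1; ext g
      rw [map_mul]; rfl
    rw [h1, h2, integral_mul_left_eq_self (fun g => ρ g v) h]
  refine (Submodule.eq_starProjection_of_mem_of_inner_eq_zero hmem ?_)
  intro w hw
  have h3 : ⟪(∫ g, ρ g v ∂μ), w⟫ = ⟪v, w⟫ := by
    rw [real_inner_comm]
    rw [← integral_inner hint w]
    have : ∀ g : G, ⟪w, ρ g v⟫ = ⟪w, v⟫ := by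
      intro g
      conv_lhs => rw [← hw g]
      exact (ρ g).inner_map_map w v
    simp only [this]
    simp [real_inner_comm]
  rw [inner_sub_left, h3, sub_self]

end helpers

section helpers2

variable {G V : Type*} [Group G] [TopologicalSpace G] [IsTopologicalGroup G] [CompactSpace G]
    [MeasurableSpace G] [BorelSpace G]
    [NormedAddCommGroup V] [InnerProductSpace ℝ V] [FiniteDimensional ℝ V]
    (μ : Measure G) [μ.IsHaarMeasure] [IsProbabilityMeasure μ]
    (ρ : G →* (V ≃ₗᵢ[ℝ] V)) (hρ : Continuous fun p : G × V => ρ p.1 p.2)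

include hρ in
lemma grad_aug (R : V → ℝ) (hR : ContDiff ℝ 1 R) {A : V} (hA : A ∈ fixedSubmodule ρ) :
    gradient (augRisk μ ρ R) A = projSub (fixedSubmodule ρ) (gradient R A) := by
  classical
  -- the representation as continuous linear maps
  set clm : G → V →L[ℝ] V := fun g => (ρ g).toLinearIsometry.toContinuousLinearMap with hclm
  have hclm_cont : Continuous clm := by
    rw [continuous_clm_apply]
    intro v
    exact cont_apply ρ hρ v
  have hRd : Differentiable ℝ R := hR.differentiable one_ne_zero
  have hfc : Continuous (fderiv ℝ R) := (hR.fderiv_right (m := 0) le_rfl).continuous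
  -- bound on the derivative on a ball
  obtain ⟨C, hC⟩ : ∃ C, ∀ x ∈ Metric.closedBall (0 : V) (‖A‖ + 1), ‖fderiv ℝ R x‖ ≤ C :=
    (isCompact_closedBall (0 : V) (‖A‖ + 1)).exists_bound_of_continuousOn hfc.continuousOn
  have hC0 : 0 ≤ C := le_trans (norm_nonneg _) (hC 0 (by simp; positivity))
  set F' : G → V →L[ℝ] ℝ := fun g => (fderiv ℝ R A).comp (clm g) with hF'
  have hF'cont : Continuous F' := continuous_const.clm_comp hclm_cont
  -- derivative of each F (· g) at points
  have hder : ∀ (g : G) (x : V),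
      HasFDerivAt (fun y => R (ρ g y)) ((fderiv ℝ R (ρ g x)).comp (clm g)) x := by
    intro g x
    exact (hRd (ρ g x)).hasFDerivAt.comp x (clm g).hasFDerivAt
  have key := hasFDerivAt_integral_of_dominated_loc_of_lip
    (F := fun x g => R (ρ g x)) (F' := F') (x₀ := A) (bound := fun _ => C)
    (μ := μ) (s := Metric.ball A 1) (Metric.ball_mem_nhds A one_pos)
    (Filter.Eventually.of_forall fun x =>
      ((hR.continuous.comp (cont_apply ρ hρ x)).aestronglyMeasurable))
    (((hR.continuous.comp (cont_apply ρ hρ A)).integrable_of_hasCompactSupport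
      (isCompact_univ.of_isClosed_subset (isClosed_tsupport _) (Set.subset_univ _))))
    hF'cont.aestronglyMeasurable
    ?_ (integrable_const C) ?_
  · obtain ⟨hF'int, hderiv⟩ := key
    have hgA : HasGradientAt R (gradient R A) A := (hRd A).hasGradientAt
    have hfderiv : fderiv ℝ R A = toDual ℝ V (gradient R A) :=
      (hasGradientAt_iff_hasFDerivAt.mp hgA).fderiv
    have heq : (∫ g, F' g ∂μ) = toDual ℝ V (projSub (fixedSubmodule ρ) (gradient R A)) := by
      ext v
      rw [ContinuousLinearMap.integral_apply hF'int]
      have h1 : ∀ g : G, F' g v = ⟪gradient R A, ρ g v⟫ := by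
        intro g
        simp only [hF', ContinuousLinearMap.comp_apply, hfderiv]
        rfl
      simp only [h1]
      rw [integral_inner (integrable_apply μ ρ hρ v) (gradient R A),
        ← avg_eq_proj μ ρ hρ v]
      rw [toDual_apply_apply]
      exact (Submodule.inner_starProjection_left_eq_right (fixedSubmodule ρ)
        (gradient R A) v).symm
    rw [heq] at hderiv
    have : HasGradientAt (augRisk μ ρ R) (projSub (fixedSubmodule ρ) (gradient R A)) A :=
      hasGradientAt_iff_hasFDerivAt.mpr hderiv
    exact this.gradient
  · -- Lipschitz bound
    refine Filter.Eventually.of_forall fun g => ?_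
    have : LipschitzOnWith (Real.toNNReal C) (fun y => R (ρ g y)) (Metric.ball A 1) := by
      apply (convex_ball A 1).lipschitzOnWith_of_nnnorm_hasFDerivWithin_le
        (f' := fun x => (fderiv ℝ R (ρ g x)).comp (clm g))
        (fun x _ => (hder g x).hasFDerivWithinAt)
      intro x hx
      have hxball : ‖fderiv ℝ R (ρ g x)‖ ≤ C := by
        apply hC
        simp only [Metric.mem_closedBall, dist_zero_right, (ρ g).norm_map]
        calc ‖x‖ ≤ ‖x - A‖ + ‖A‖ := by simpa using norm_add_le (x - A) A
          _ ≤ 1 + ‖A‖ := by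
            have := Metric.mem_ball.mp hx
            rw [dist_eq_norm] at this
            linarith
          _ = ‖A‖ + 1 := by ring
      rw [← NNReal.coe_le_coe, coe_nnnorm, Real.coe_toNNReal C hC0]
      refine ContinuousLinearMap.opNorm_le_bound _ hC0 fun v => ?_
      calc ‖(fderiv ℝ R (ρ g x)) (clm g v)‖ ≤ ‖fderiv ℝ R (ρ g x)‖ * ‖clm g v‖ :=
          ContinuousLinearMap.le_opNorm _ _
        _ ≤ C * ‖v‖ := by
          have : ‖clm g v‖ = ‖v‖ := (ρ g).norm_map v
          rw [this]
          exact mul_le_mul_of_nonneg_right hxball (norm_nonneg v)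
    have hcoe : Real.nnabs C = Real.toNNReal C := by
      ext
      simp [Real.coe_toNNReal C hC0, abs_of_nonneg hC0]
    rwa [hcoe]
  · -- derivative at A
    refine Filter.Eventually.of_forall fun g => ?_
    have := hder g A
    rwa [hA g] at this

end helpers2

lemma proj_comp_eq {V : Type*} [NormedAddCommGroup V] [InnerProductSpace ℝ V]
    [FiniteDimensional ℝ V] (H L : Submodule ℝ V)
    (hc : (projSub L).comp (projSub H) = (projSub H).comp (projSub L)) (w : V) :
    projSub L (projSub H w) = projSub (H ⊓ L) w := by
  have hmemL : projSub L (projSub H w) ∈ L := SetLike.coe_mem _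
  have hcw : projSub L (projSub H w) = projSub H (projSub L w) :=
    congrFun (congrArg DFunLike.coe hc) w
  have hmemH : projSub L (projSub H w) ∈ H := by
    rw [hcw]; exact SetLike.coe_mem _
  refine (Submodule.eq_starProjection_of_mem_of_inner_eq_zero
    (Submodule.mem_inf.mpr ⟨hmemH, hmemL⟩) ?_).symm
  intro u hu
  obtain ⟨huH, huL⟩ := Submodule.mem_inf.mp hu
  have h1 : ⟪projSub L (projSub H w), u⟫ = ⟪projSub H w, u⟫ := by
    have := Submodule.inner_starProjection_left_eq_right L (projSub H w) u
    rw [show L.starProjection u = u from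
      Submodule.starProjection_eq_self_iff.mpr huL] at this
    exact this
  have h2 : ⟪projSub H w, u⟫ = ⟪w, u⟫ := by
    have := Submodule.inner_starProjection_left_eq_right H w u
    rw [show H.starProjection u = u from
      Submodule.starProjection_eq_self_iff.mpr huH] at this
    exact this
  rw [inner_sub_left, h1, h2, sub_self]


/-- Under the compatibility condition, a point of `E` is stationary for the
augmented dynamics `A' = -Π_L ∇R^aug(A)` iff it is stationary for the equivariant
dynamics `A' = -Π_E ∇R(A)`. -/
theorem stationary_points_agree
    {G V : Type*} [Group G] [TopologicalSpace G] [IsTopologicalGroup G] [CompactSpace G]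
    [MeasurableSpace G] [BorelSpace G]
    [NormedAddCommGroup V] [InnerProductSpace ℝ V] [FiniteDimensional ℝ V]
    (μ : Measure G) [μ.IsHaarMeasure] [IsProbabilityMeasure μ]
    (ρ : G →* (V ≃ₗᵢ[ℝ] V)) (hρ : Continuous fun p : G × V => ρ p.1 p.2)
    (L : Submodule ℝ V)
    (hcompat : (projSub L).comp (projSub (fixedSubmodule ρ)) =
      (projSub (fixedSubmodule ρ)).comp (projSub L))
    (R : V → ℝ) (hR : ContDiff ℝ 1 R)
    (A : V) (hA : A ∈ fixedSubmodule ρ ⊓ L) :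
    projSub L (gradient (augRisk μ ρ R) A) = 0 ↔
      projSub (fixedSubmodule ρ ⊓ L) (gradient R A) = 0 := by
  rw [grad_aug μ ρ hρ R hR (Submodule.mem_inf.mp hA).1,
    proj_comp_eq (fixedSubmodule ρ) L hcompat (gradient R A)]
end
end

section
/- Assume the compatibility condition Π_L Π_G = Π_G Π_L and that R is continuously differentiable with locally Lipschitz gradient. Let A* ∈ E be a stationary point. Call A* Lyapunov stable for a dynamics A' = F(A) on a set M ∋ A* if for every ε > 0 there exists δ > 0 such that every solution of the dynamics starting in M within distance δ of A* exists for all t ≥ 0 and remains within distance ε of A*. If A* is Lyapunov stable for the augmented dynamics A' = −Π_L ∇R^aug(A) on L, then A* is Lyapunov stable for the equivariant dynamics A' = −Π_E ∇R(A) on E. -/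
open MeasureTheory InnerProductSpace RealInnerProductSpace

noncomputable section

/-- `Astar` is Lyapunov stable for the dynamics `A' = F(A)` on the set `M`: for every
`ε > 0` there is `δ > 0` such that every (globally defined) solution of the dynamics
taking values in `M` and starting within distance `δ` of `Astar` remains within distance
`ε` of `Astar` for all `t ≥ 0`. -/
def IsLyapunovStable {V : Type*} [NormedAddCommGroup V] [NormedSpace ℝ V]
    (F : V → V) (M : Set V) (Astar : V) : Prop :=
  ∀ ε > (0 : ℝ), ∃ δ > (0 : ℝ), ∀ A : ℝ → V,
    (∀ t : ℝ, 0 ≤ t → A t ∈ M) →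
    (∀ t : ℝ, 0 ≤ t → HasDerivAt A (F (A t)) t) →
    ‖A 0 - Astar‖ < δ →
    ∀ t : ℝ, 0 ≤ t → ‖A t - Astar‖ < ε


section Aux

variable {G V : Type*} [Group G] [TopologicalSpace G] [IsTopologicalGroup G] [CompactSpace G]
  [MeasurableSpace G] [BorelSpace G]
  [NormedAddCommGroup V] [InnerProductSpace ℝ V] [FiniteDimensional ℝ V]

lemma projSub_apply (K : Submodule ℝ V) [K.HasOrthogonalProjection] (v : V) :
    projSub K v = K.starProjection v := rfl

lemma cont_rho_apply (ρ : G →* (V ≃ₗᵢ[ℝ] V)) (hρ : Continuous fun p : G × V => ρ p.1 p.2)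
    (v : V) : Continuous fun g : G => ρ g v :=
  hρ.comp (continuous_id.prodMk continuous_const)

lemma integrable_of_cont {E : Type*} [NormedAddCommGroup E]
    (μ : Measure G) [μ.IsHaarMeasure] {f : G → E} (hf : Continuous f) :
    MeasureTheory.Integrable f μ :=
  hf.integrable_of_hasCompactSupport (HasCompactSupport.of_compactSpace f)

/-- Averaging over the group is the orthogonal projection onto the fixed subspace. -/
lemma avg_eq_proj_s3 (μ : Measure G) [μ.IsHaarMeasure] [IsProbabilityMeasure μ]
    (ρ : G →* (V ≃ₗᵢ[ℝ] V)) (hρ : Continuous fun p : G × V => ρ p.1 p.2) (v : V) :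
    ∫ g, ρ g v ∂μ = projSub (fixedSubmodule ρ) v := by
  have hint : MeasureTheory.Integrable (fun g : G => ρ g v) μ :=
    integrable_of_cont μ (cont_rho_apply ρ hρ v)
  have hmem : (∫ g, ρ g v ∂μ) ∈ fixedSubmodule ρ := by
    intro h
    have h1 : (ρ h) (∫ g, ρ g v ∂μ) = ∫ g, ρ h (ρ g v) ∂μ :=
      ((ρ h).toLinearIsometry.integral_comp_comm (fun g : G => ρ g v)).symm
    have h2 : ∀ g : G, ρ h (ρ g v) = ρ (h * g) v := by
      intro g; rw [map_mul]; rfl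
    rw [h1]
    simp_rw [h2]
    exact MeasureTheory.integral_mul_left_eq_self (fun g : G => ρ g v) h
  rw [projSub_apply]
  refine (Submodule.eq_starProjection_of_mem_of_inner_eq_zero hmem ?_).symm
  intro w hw
  have h3 : ⟪∫ g, ρ g v ∂μ, w⟫ = ∫ g, ⟪ρ g v, w⟫ ∂μ := by
    rw [real_inner_comm, ← integral_inner hint w]
    exact MeasureTheory.integral_congr_ae (Filter.Eventually.of_forall fun g => real_inner_comm _ _)
  have h4 : ∀ g : G, ⟪ρ g v, w⟫ = ⟪v, w⟫ := by
    intro g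
    conv_lhs => rw [← hw g]
    exact (ρ g).inner_map_map v w
  rw [inner_sub_left, h3]
  simp_rw [h4]
  simp

/-- The gradient of the augmented risk at a fixed point of the representation. -/
lemma grad_augRisk (μ : Measure G) [μ.IsHaarMeasure] [IsProbabilityMeasure μ]
    (ρ : G →* (V ≃ₗᵢ[ℝ] V)) (hρ : Continuous fun p : G × V => ρ p.1 p.2)
    (R : V → ℝ) (hR : ContDiff ℝ 1 R) {A : V} (hA : A ∈ fixedSubmodule ρ) :
    gradient (augRisk μ ρ R) A = projSub (fixedSubmodule ρ) (gradient R A) := by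
  classical
  set T : G → V →L[ℝ] V := fun g => ((ρ g).toContinuousLinearEquiv : V ≃L[ℝ] V).toContinuousLinearMap with hT
  have hTapp : ∀ g x, T g x = ρ g x := fun g x => rfl
  have hTcont : Continuous T := by
    rw [continuous_clm_apply]
    intro y
    exact cont_rho_apply ρ hρ y
  have hTnorm : ∀ g, ‖T g‖ ≤ 1 := by
    intro g
    refine ContinuousLinearMap.opNorm_le_bound _ zero_le_one (fun y => ?_)
    rw [hTapp, one_mul]
    exact le_of_eq ((ρ g).norm_map y)
  have hRd : Differentiable ℝ R := hR.differentiable one_ne_zero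
  have hfc : Continuous fun v => fderiv ℝ R v := hR.continuous_fderiv one_ne_zero
  -- bound on the compact ball
  obtain ⟨C, hC⟩ := (isCompact_closedBall (0 : V) (‖A‖ + 1)).exists_bound_of_continuousOn
    hfc.continuousOn
  -- differentiation under the integral sign
  have key : HasFDerivAt (augRisk μ ρ R)
      (∫ g, (fderiv ℝ R (ρ g A)).comp (T g) ∂μ) A := by
    apply hasFDerivAt_integral_of_dominated_of_fderiv_le
      (F' := fun x g => (fderiv ℝ R (ρ g x)).comp (T g)) (bound := fun _ => C)
      (s := Metric.ball A 1) (Metric.ball_mem_nhds A one_pos)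
    · filter_upwards with x
      exact ((hR.continuous.comp (cont_rho_apply ρ hρ x))).aestronglyMeasurable
    · exact integrable_of_cont μ (hR.continuous.comp (cont_rho_apply ρ hρ A))
    · exact (Continuous.clm_comp (hfc.comp (cont_rho_apply ρ hρ A)) hTcont).aestronglyMeasurable
    · filter_upwards with g
      intro x hx
      have hxball : ρ g x ∈ Metric.closedBall (0 : V) (‖A‖ + 1) := by
        rw [Metric.mem_closedBall, dist_zero_right, (ρ g).norm_map]
        have : ‖x - A‖ < 1 := by rwa [← dist_eq_norm, ← Metric.mem_ball]
        calc ‖x‖ = ‖x - A + A‖ := by rw [sub_add_cancel]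
          _ ≤ ‖x - A‖ + ‖A‖ := norm_add_le _ _
          _ ≤ ‖A‖ + 1 := by linarith
      calc ‖(fderiv ℝ R (ρ g x)).comp (T g)‖
          ≤ ‖fderiv ℝ R (ρ g x)‖ * ‖T g‖ := ContinuousLinearMap.opNorm_comp_le _ _
        _ ≤ C * 1 := by
            apply mul_le_mul (hC _ hxball) (hTnorm g) (norm_nonneg _)
            exact le_trans (norm_nonneg _) (hC _ hxball)
        _ = C := mul_one C
    · exact MeasureTheory.integrable_const C
    · filter_upwards with g
      intro x hx
      exact ((hRd (ρ g x)).hasFDerivAt).comp x (T g).hasFDerivAt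
  -- rewrite using `ρ g A = A`
  have key2 : HasFDerivAt (augRisk μ ρ R)
      (∫ g, (fderiv ℝ R A).comp (T g) ∂μ) A := by
    convert key using 2
    funext g
    rw [hA g]
  -- identify the integral with the dual of the projected gradient
  have hgradR : HasGradientAt R (gradient R A) A := (hRd A).hasGradientAt
  have hfR : fderiv ℝ R A = InnerProductSpace.toDual ℝ V (gradient R A) :=
    hgradR.hasFDerivAt.fderiv
  have hint2 : MeasureTheory.Integrable (fun g : G => (fderiv ℝ R A).comp (T g)) μ :=
    integrable_of_cont μ (Continuous.clm_comp continuous_const hTcont)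
  have heq : (∫ g, (fderiv ℝ R A).comp (T g) ∂μ)
      = InnerProductSpace.toDual ℝ V (projSub (fixedSubmodule ρ) (gradient R A)) := by
    apply ContinuousLinearMap.ext
    intro v
    rw [ContinuousLinearMap.integral_apply hint2 v]
    have lhs : ∀ g : G, ((fderiv ℝ R A).comp (T g)) v = ⟪gradient R A, ρ g v⟫ := by
      intro g
      rw [ContinuousLinearMap.comp_apply, hfR, hTapp]
      exact InnerProductSpace.toDual_apply_apply
    simp_rw [lhs]
    rw [InnerProductSpace.toDual_apply_apply, projSub_apply,
      Submodule.inner_starProjection_left_eq_right, ← projSub_apply, ← avg_eq_proj_s3 μ ρ hρ v,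
      integral_inner (integrable_of_cont μ (cont_rho_apply ρ hρ v))]
  rw [heq] at key2
  have : HasGradientAt (augRisk μ ρ R) (projSub (fixedSubmodule ρ) (gradient R A)) A :=
    hasGradientAt_iff_hasFDerivAt.mpr key2
  exact this.gradient

/-- For commuting projections, the composition is the projection onto the intersection. -/
lemma proj_inter (ρ : G →* (V ≃ₗᵢ[ℝ] V)) (L : Submodule ℝ V)
    (hcompat : (projSub L).comp (projSub (fixedSubmodule ρ)) =
      (projSub (fixedSubmodule ρ)).comp (projSub L)) (v : V) :
    projSub (fixedSubmodule ρ ⊓ L) v = projSub L (projSub (fixedSubmodule ρ) v) := by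
  set K := fixedSubmodule ρ with hK
  have hmem : projSub L (projSub K v) ∈ K ⊓ L := by
    constructor
    · have := congrArg (fun (f : V →L[ℝ] V) => f v) hcompat
      simp only [ContinuousLinearMap.comp_apply] at this
      rw [this]
      exact (K.orthogonalProjectionOnto (projSub L v)).2
    · exact (L.orthogonalProjectionOnto (projSub K v)).2
  rw [projSub_apply]
  refine Submodule.eq_starProjection_of_mem_of_inner_eq_zero hmem ?_
  intro w hw
  have hwK : w ∈ K := hw.1
  have hwL : w ∈ L := hw.2
  have h1 : ⟪projSub L (projSub K v), w⟫ = ⟪v, w⟫ := by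
    rw [projSub_apply, Submodule.inner_starProjection_left_eq_right,
      Submodule.starProjection_eq_self_iff.mpr hwL, projSub_apply,
      Submodule.inner_starProjection_left_eq_right,
      Submodule.starProjection_eq_self_iff.mpr hwK]
  rw [inner_sub_left, h1, sub_self]

end Aux

/-- Under the compatibility condition, a stationary point `Astar ∈ E` that is
Lyapunov stable for the augmented dynamics `A' = -Π_L ∇R^aug(A)` on `L` is also Lyapunov
stable for the equivariant dynamics `A' = -Π_E ∇R(A)` on `E`. -/
theorem stable_for_augmented_implies_stable_for_equivariant
    {G V : Type*} [Group G] [TopologicalSpace G] [IsTopologicalGroup G] [CompactSpace G]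
    [MeasurableSpace G] [BorelSpace G]
    [NormedAddCommGroup V] [InnerProductSpace ℝ V] [FiniteDimensional ℝ V]
    (μ : Measure G) [μ.IsHaarMeasure] [IsProbabilityMeasure μ]
    (ρ : G →* (V ≃ₗᵢ[ℝ] V)) (hρ : Continuous fun p : G × V => ρ p.1 p.2)
    (L : Submodule ℝ V)
    (hcompat : (projSub L).comp (projSub (fixedSubmodule ρ)) =
      (projSub (fixedSubmodule ρ)).comp (projSub L))
    (R : V → ℝ) (hR : ContDiff ℝ 1 R) (hlip : LocallyLipschitz (gradient R))
    (Astar : V) (hAstar : Astar ∈ fixedSubmodule ρ ⊓ L)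
    (hstat : projSub (fixedSubmodule ρ ⊓ L) (gradient R Astar) = 0)
    (hstab : IsLyapunovStable
      (fun A => -(projSub L (gradient (augRisk μ ρ R) A))) (L : Set V) Astar) :
    IsLyapunovStable (fun A => -(projSub (fixedSubmodule ρ ⊓ L) (gradient R A)))
      ((fixedSubmodule ρ ⊓ L : Submodule ℝ V) : Set V) Astar := by
  intro ε hε
  obtain ⟨δ, hδ, H⟩ := hstab ε hε
  refine ⟨δ, hδ, ?_⟩
  intro A hmem hderiv h0 t ht
  refine H A (fun s hs => (hmem s hs).2) ?_ h0 t ht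
  intro s hs
  have hAs : A s ∈ fixedSubmodule ρ := (hmem s hs).1
  have h1 : gradient (augRisk μ ρ R) (A s) = projSub (fixedSubmodule ρ) (gradient R (A s)) :=
    grad_augRisk μ ρ hρ R hR hAs
  have h2 : projSub L (gradient (augRisk μ ρ R) (A s))
      = projSub (fixedSubmodule ρ ⊓ L) (gradient R (A s)) := by
    rw [h1, ← proj_inter ρ L hcompat]
  show HasDerivAt A (-(projSub L (gradient (augRisk μ ρ R) (A s)))) s
  rw [h2]
  exact hderiv s hs
end
end

section
/- (Fact A) Assume the compatibility condition Π_L Π_G = Π_G Π_L and that R is continuously differentiable. Then for every A ∈ E one has Π_L ∇R^aug(A) = Π_E ∇R(A); in particular, when restricted to E the augmented projected gradient field and the equivariant projected gradient field coincide. -/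
open MeasureTheory InnerProductSpace RealInnerProductSpace

noncomputable section

/-- A Haar probability measure on a compact group is right invariant. -/
private lemma haarRightInv {G : Type*} [Group G] [TopologicalSpace G] [IsTopologicalGroup G]
    [CompactSpace G] [MeasurableSpace G] [BorelSpace G]
    (μ : Measure G) [μ.IsHaarMeasure] [IsProbabilityMeasure μ] :
    μ.IsMulRightInvariant := by
  constructor
  intro h
  have hm : Measurable (· * h : G → G) := measurable_mul_const h
  haveI h1 : IsProbabilityMeasure (μ.map (· * h)) := Measure.isProbabilityMeasure_map hm.aemeasurable
  haveI h2 : (μ.map (· * h)).IsOpenPosMeasure := by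
    constructor
    intro U hU hne
    rw [Measure.map_apply hm hU.measurableSet]
    apply (hU.preimage (continuous_mul_right h)).measure_ne_zero μ
    obtain ⟨x, hx⟩ := hne
    exact ⟨x * h⁻¹, by simpa using hx⟩
  haveI h3 : (μ.map (· * h)).IsHaarMeasure := Measure.IsHaarMeasure.mk
  exact Measure.isHaarMeasure_eq_of_isProbabilityMeasure _ μ

/-- A continuous function on a compact space is integrable w.r.t. a finite measure. -/
private lemma contIntegrable {X E : Type*} [TopologicalSpace X] [CompactSpace X]
    [MeasurableSpace X] [OpensMeasurableSpace X] [NormedAddCommGroup E]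
    {μ : Measure X} [IsFiniteMeasureOnCompacts μ] {f : X → E} (hf : Continuous f) :
    Integrable f μ :=
  hf.integrable_of_hasCompactSupport (IsClosed.isCompact (isClosed_tsupport _))

/-- Characterization of the orthogonal projection. -/
private lemma projSub_eq {V : Type*} [NormedAddCommGroup V] [InnerProductSpace ℝ V]
    (K : Submodule ℝ V) [K.HasOrthogonalProjection] {u v : V} (hv : v ∈ K)
    (ho : ∀ w ∈ K, ⟪u - v, w⟫ = 0) : projSub K u = v :=
  K.eq_starProjection_of_mem_of_inner_eq_zero hv ho

private lemma projSub_mem {V : Type*} [NormedAddCommGroup V] [InnerProductSpace ℝ V]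
    (K : Submodule ℝ V) [K.HasOrthogonalProjection] (u : V) : projSub K u ∈ K :=
  SetLike.coe_mem _

private lemma projSub_self_adjoint {V : Type*} [NormedAddCommGroup V] [InnerProductSpace ℝ V]
    (K : Submodule ℝ V) [K.HasOrthogonalProjection] (u v : V) :
    ⟪projSub K u, v⟫ = ⟪u, projSub K v⟫ :=
  K.inner_starProjection_left_eq_right u v

private lemma projSub_mem_self {V : Type*} [NormedAddCommGroup V] [InnerProductSpace ℝ V]
    (K : Submodule ℝ V) [K.HasOrthogonalProjection] {u : V} (hu : u ∈ K) : projSub K u = u :=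
  K.starProjection_eq_self_iff.mpr hu

/-- Fact A: Under the compatibility condition, for every `A ∈ E` the
augmented projected gradient coincides with the equivariant projected gradient:
`Π_L ∇R^aug(A) = Π_E ∇R(A)`. -/
theorem factA
    {G V : Type*} [Group G] [TopologicalSpace G] [IsTopologicalGroup G] [CompactSpace G]
    [MeasurableSpace G] [BorelSpace G]
    [NormedAddCommGroup V] [InnerProductSpace ℝ V] [FiniteDimensional ℝ V]
    (μ : Measure G) [μ.IsHaarMeasure] [IsProbabilityMeasure μ]
    (ρ : G →* (V ≃ₗᵢ[ℝ] V)) (hρ : Continuous fun p : G × V => ρ p.1 p.2)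
    (L : Submodule ℝ V)
    (hcompat : (projSub L).comp (projSub (fixedSubmodule ρ)) =
      (projSub (fixedSubmodule ρ)).comp (projSub L))
    (R : V → ℝ) (hR : ContDiff ℝ 1 R)
    (A : V) (hA : A ∈ fixedSubmodule ρ ⊓ L) :
    projSub L (gradient (augRisk μ ρ R) A) = projSub (fixedSubmodule ρ ⊓ L) (gradient R A) := by
  haveI : μ.IsMulRightInvariant := haarRightInv μ
  set H := fixedSubmodule ρ with hHdef
  set w := gradient R A with hwdef
  obtain ⟨hAH, hAL⟩ := hA
  have hAfix : ∀ g : G, ρ g A = A := hAH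
  -- continuity helpers
  have cρ : ∀ v : V, Continuous fun g : G => ρ g v := fun v =>
    hρ.comp (continuous_id.prodMk continuous_const)
  have hsymm : ∀ (g : G) (v : V), (ρ g).symm v = ρ g⁻¹ v := by
    intro g v
    rw [map_inv]
    rfl
  have csymm : ∀ v : V, Continuous fun g : G => (ρ g).symm v := by
    intro v
    simp only [hsymm]
    exact (cρ v).comp continuous_inv
  -- the averaged vector
  set p := ∫ g, (ρ g).symm w ∂μ with hpdef
  have hint_p : Integrable (fun g => (ρ g).symm w) μ := contIntegrable (csymm w)
  -- inner product against integrals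
  have innerInt : ∀ (f : G → V), Integrable f μ → ∀ v : V,
      ⟪∫ g, f g ∂μ, v⟫ = ∫ g, ⟪f g, v⟫ ∂μ := by
    intro f hf v
    rw [real_inner_comm, ← integral_inner hf]
    simp_rw [real_inner_comm v]
  -- differentiability of R
  have hDiffR : Differentiable ℝ R := hR.differentiable one_ne_zero
  have hwfd : fderiv ℝ R A = toDual ℝ V w := ((hDiffR A).hasGradientAt.hasFDerivAt).fderiv
  -- the isometries as continuous linear maps
  set T : G → V →L[ℝ] V := fun g => (ρ g).toLinearIsometry.toContinuousLinearMap with hTdef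
  have hT_apply : ∀ (g : G) (v : V), T g v = ρ g v := fun _ _ => rfl
  -- derivative of the integrand family
  set F' : V → G → V →L[ℝ] ℝ := fun x g => (fderiv ℝ R (ρ g x)).comp (T g) with hF'def
  have cfd : Continuous (fderiv ℝ R) := hR.continuous_fderiv one_ne_zero
  have cF'A : Continuous (fun g => F' A g) := by
    rw [continuous_clm_apply]
    intro v
    show Continuous fun g => fderiv ℝ R (ρ g A) (T g v)
    exact ((cfd.comp (cρ A)).clm_apply (cρ v))
  have hInt_F' : Integrable (fun g => F' A g) μ := contIntegrable cF'A
  -- bound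
  obtain ⟨C, hC⟩ := (isCompact_closedBall (0 : V) (‖A‖ + 1)).exists_bound_of_continuousOn
    cfd.continuousOn
  -- differentiation under the integral sign
  have bigFDeriv : HasFDerivAt (fun x => ∫ g, R (ρ g x) ∂μ) (∫ g, F' A g ∂μ) A := by
    apply hasFDerivAt_integral_of_dominated_of_fderiv_le (F := fun x g => R (ρ g x))
      (bound := fun _ => C) (Metric.ball_mem_nhds A one_pos)
    · exact Filter.Eventually.of_forall fun x =>
        ((hR.continuous.comp (cρ x)).aestronglyMeasurable)
    · exact contIntegrable (hR.continuous.comp (cρ A))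
    · exact cF'A.aestronglyMeasurable
    · refine Filter.Eventually.of_forall fun g => fun x hx => ?_
      have hmem : ρ g x ∈ Metric.closedBall (0 : V) (‖A‖ + 1) := by
        rw [Metric.mem_closedBall, dist_zero_right, (ρ g).norm_map]
        have : ‖x - A‖ < 1 := by
          rw [← dist_eq_norm]
          exact Metric.mem_ball.mp hx
        calc ‖x‖ = ‖x - A + A‖ := by rw [sub_add_cancel]
          _ ≤ ‖x - A‖ + ‖A‖ := norm_add_le _ _
          _ ≤ ‖A‖ + 1 := by linarith
      apply ContinuousLinearMap.opNorm_le_bound _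
        (le_trans (norm_nonneg _) (hC _ hmem))
      intro v
      calc ‖(fderiv ℝ R (ρ g x)).comp (T g) v‖
          = ‖fderiv ℝ R (ρ g x) (T g v)‖ := rfl
        _ ≤ ‖fderiv ℝ R (ρ g x)‖ * ‖T g v‖ := ContinuousLinearMap.le_opNorm _ _
        _ = ‖fderiv ℝ R (ρ g x)‖ * ‖v‖ := by rw [hT_apply, (ρ g).norm_map]
        _ ≤ C * ‖v‖ := by
            apply mul_le_mul_of_nonneg_right (hC _ hmem) (norm_nonneg v)
    · exact integrable_const C
    · refine Filter.Eventually.of_forall fun g => fun x _ => ?_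
      have h1 : HasFDerivAt (T g) (T g) x := (T g).hasFDerivAt
      have h2 : HasFDerivAt R (fderiv ℝ R (ρ g x)) (T g x) :=
        (hDiffR (T g x)).hasFDerivAt
      exact h2.comp x h1
  -- identify the gradient of the augmented risk
  have key : toDual ℝ V p = ∫ g, F' A g ∂μ := by
    apply ContinuousLinearMap.ext
    intro v
    rw [ContinuousLinearMap.integral_apply hInt_F' v, toDual_apply_apply, hpdef,
      innerInt _ hint_p v]
    apply integral_congr_ae
    refine Filter.Eventually.of_forall fun g => ?_
    show ⟪(ρ g).symm w, v⟫_ℝ = F' A g v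
    have e1 : F' A g v = fderiv ℝ R A (ρ g v) := by
      simp only [hF'def, hAfix g]
      rfl
    rw [e1, hwfd, toDual_apply_apply, ← (ρ g).inner_map_map ((ρ g).symm w) v,
      (ρ g).apply_symm_apply]
  have hgrad : gradient (augRisk μ ρ R) A = p := by
    apply HasGradientAt.gradient
    rw [hasGradientAt_iff_hasFDerivAt, key]
    exact bigFDeriv
  -- p is the projection of w onto the fixed subspace
  have hpH : p ∈ H := by
    intro h
    have hTh : ρ h p = ∫ g, ρ h ((ρ g).symm w) ∂μ :=
      ((T h).integral_comp_comm hint_p).symm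
    have e2 : ∀ g : G, ρ h ((ρ g).symm w) = (ρ (g * h⁻¹)).symm w := by
      intro g
      rw [hsymm, hsymm]
      have : ρ (g * h⁻¹)⁻¹ = ρ h * ρ g⁻¹ := by
        rw [mul_inv_rev, inv_inv, map_mul]
      rw [this]
      rfl
    rw [hTh]
    simp_rw [e2]
    exact integral_mul_right_eq_self (fun g => (ρ g).symm w) h⁻¹
  have horth : ∀ v ∈ H, ⟪w - p, v⟫ = 0 := by
    intro v hv
    have hvfix : ∀ g : G, ρ g v = v := hv
    rw [inner_sub_left, sub_eq_zero]
    rw [hpdef, innerInt _ hint_p v]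
    have e3 : ∀ g : G, ⟪(ρ g).symm w, v⟫ = ⟪w, v⟫ := by
      intro g
      conv_lhs => rw [← (ρ g).inner_map_map ((ρ g).symm w) v, (ρ g).apply_symm_apply, hvfix g]
    simp_rw [e3]
    simp
  have hPw : projSub H w = p := projSub_eq H hpH horth
  -- product of commuting projections is the projection onto the intersection
  have hfinal : projSub (H ⊓ L) w = projSub L p := by
    rw [← hPw]
    apply projSub_eq
    · refine Submodule.mem_inf.mpr ⟨?_, ?_⟩
      · have := DFunLike.congr_fun hcompat w
        simp only [ContinuousLinearMap.comp_apply] at this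
        rw [this]
        exact projSub_mem H _
      · exact projSub_mem L _
    · intro u hu
      obtain ⟨huH, huL⟩ := Submodule.mem_inf.mp hu
      rw [inner_sub_left, sub_eq_zero]
      rw [projSub_self_adjoint, projSub_mem_self L huL,
        projSub_self_adjoint, projSub_mem_self H huH]
  rw [hgrad, hfinal]
end
end

section
/- (Fact B) Assume the compatibility condition Π_L Π_G = Π_G Π_L and that R is twice continuously differentiable. Then for every A ∈ E and every Y ∈ TE^⊥, the vector Π_L (R^aug)''(A) Y belongs to TE^⊥, where (R^aug)''(A) denotes the Hessian of R^aug at A regarded as a self-adjoint linear map on V. -/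
open MeasureTheory InnerProductSpace RealInnerProductSpace

noncomputable section

section Aux

variable {G V : Type*} [Group G] [TopologicalSpace G] [IsTopologicalGroup G] [CompactSpace G]
    [MeasurableSpace G] [BorelSpace G]
    [NormedAddCommGroup V] [InnerProductSpace ℝ V] [FiniteDimensional ℝ V]

/-- On a compact group, a Haar probability measure is right invariant. -/
lemma factB_haar_right_inv (μ : Measure G) [μ.IsHaarMeasure] [IsProbabilityMeasure μ] :
    μ.IsMulRightInvariant := by
  haveI : LocallyCompactSpace G :=
    isCompact_univ.locallyCompactSpace_of_mem_nhds_of_group (x := (1 : G)) Filter.univ_mem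
  constructor
  intro g
  haveI : IsProbabilityMeasure (μ.map (· * g)) :=
    Measure.isProbabilityMeasure_map (measurable_mul_const g).aemeasurable
  exact Measure.isHaarMeasure_eq_of_isProbabilityMeasure _ μ

/-- The augmented risk is invariant under the group action. -/
lemma factB_augRisk_inv (μ : Measure G) [μ.IsHaarMeasure] [IsProbabilityMeasure μ]
    (ρ : G →* (V ≃ₗᵢ[ℝ] V)) (R : V → ℝ) (g : G) (x : V) :
    augRisk μ ρ R (ρ g x) = augRisk μ ρ R x := by
  haveI := factB_haar_right_inv μ
  have h1 : ∀ h : G, R (ρ h (ρ g x)) = R (ρ (h * g) x) := by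
    intro h
    rw [map_mul]
    rfl
  calc ∫ h, R (ρ h (ρ g x)) ∂μ = ∫ h, R (ρ (h * g) x) ∂μ := by simp_rw [h1]
    _ = ∫ h, R (ρ h x) ∂μ := integral_mul_right_eq_self (fun h => R (ρ h x)) g

/-- Gradient of an invariant function is equivariant. -/
lemma factB_gradient_eqv (F : V → ℝ) (e : V ≃ₗᵢ[ℝ] V) (hF : ∀ x, F (e x) = F x) (x : V) :
    gradient F x = e.symm (gradient F (e x)) := by
  have hf : fderiv ℝ F x =
      (fderiv ℝ F ((e : V ≃L[ℝ] V) x)).comp ((e : V ≃L[ℝ] V) : V →L[ℝ] V) := by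
    rw [← (e : V ≃L[ℝ] V).comp_right_fderiv]
    congr 1
    funext y
    exact (hF y).symm
  apply ext_inner_right ℝ
  intro v
  have lhs : ⟪gradient F x, v⟫ = fderiv ℝ F x v := InnerProductSpace.toDual_symm_apply
  have rhs1 : ⟪gradient F (e x), e v⟫ = fderiv ℝ F (e x) (e v) :=
    InnerProductSpace.toDual_symm_apply
  calc ⟪gradient F x, v⟫ = fderiv ℝ F x v := lhs
    _ = fderiv ℝ F (e x) (e v) := by rw [hf]; simp
    _ = ⟪gradient F (e x), e v⟫ := rhs1.symm
    _ = ⟪e (e.symm (gradient F (e x))), e v⟫ := by rw [e.apply_symm_apply]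
    _ = ⟪e.symm (gradient F (e x)), v⟫ := e.inner_map_map _ _

/-- The Hessian of an invariant function at a fixed point commutes with the action. -/
lemma factB_hess_comm (F : V → ℝ) (e : V ≃ₗᵢ[ℝ] V) (hF : ∀ x, F (e x) = F x) (A : V)
    (hA : e A = A) (v : V) : hess F A (e v) = e (hess F A v) := by
  have hg : gradient F = (⇑e.symm) ∘ (gradient F ∘ ⇑e) := by
    funext y
    exact factB_gradient_eqv F e hF y
  have h2 : fderiv ℝ (gradient F ∘ ⇑e) A =
      (fderiv ℝ (gradient F) A).comp ((e : V ≃L[ℝ] V) : V →L[ℝ] V) := by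
    have h := (e : V ≃L[ℝ] V).comp_right_fderiv (f := gradient F) (x := A)
    have he : (⇑(e : V ≃L[ℝ] V) : V → V) = ⇑e := by ext y; simp
    rw [he] at h
    rw [h]
    congr 1
    rw [hA]
  have h4 : hess F A v = e.symm (hess F A (e v)) := by
    conv_lhs => rw [hess, hg]
    rw [e.symm.comp_fderiv, h2]
    rfl
  rw [h4, e.apply_symm_apply]

/-- The adjoint of an equivariant operator preserves the fixed subspace. -/
lemma factB_adjoint_fixed (ρ : G →* (V ≃ₗᵢ[ℝ] V)) (T : V →L[ℝ] V)
    (hT : ∀ g v, T (ρ g v) = ρ g (T v)) {w : V} (hw : w ∈ fixedSubmodule ρ) :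
    ContinuousLinearMap.adjoint T w ∈ fixedSubmodule ρ := by
  intro g
  have hsymm : ∀ u : V, (ρ g).symm u = ρ g⁻¹ u := by
    intro u
    apply (ρ g).injective
    rw [(ρ g).apply_symm_apply]
    have : ρ g (ρ g⁻¹ u) = ρ (g * g⁻¹) u := by rw [map_mul]; rfl
    rw [this, mul_inv_cancel, map_one]
    rfl
  apply ext_inner_right ℝ
  intro v
  calc ⟪ρ g (ContinuousLinearMap.adjoint T w), v⟫
      = ⟪ρ g (ContinuousLinearMap.adjoint T w), ρ g ((ρ g).symm v)⟫ := by
        rw [(ρ g).apply_symm_apply]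
    _ = ⟪ContinuousLinearMap.adjoint T w, (ρ g).symm v⟫ := (ρ g).inner_map_map _ _
    _ = ⟪w, T ((ρ g).symm v)⟫ := ContinuousLinearMap.adjoint_inner_left T _ _
    _ = ⟪w, (ρ g).symm (T v)⟫ := by rw [hsymm, hT, ← hsymm]
    _ = ⟪ρ g w, T v⟫ := by
        rw [← (ρ g).inner_map_map w ((ρ g).symm (T v)), (ρ g).apply_symm_apply]
    _ = ⟪w, T v⟫ := by rw [hw g]
    _ = ⟪ContinuousLinearMap.adjoint T w, v⟫ :=
        (ContinuousLinearMap.adjoint_inner_left T v w).symm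

end Aux

/-- Fact B: Under the compatibility condition, for `A ∈ E` and
`Y ∈ TEᗮ` (the orthogonal complement of `E` within `L`), the vector
`Π_L (R^aug)''(A) Y` belongs to `TEᗮ`. -/
theorem factB
    {G V : Type*} [Group G] [TopologicalSpace G] [IsTopologicalGroup G] [CompactSpace G]
    [MeasurableSpace G] [BorelSpace G]
    [NormedAddCommGroup V] [InnerProductSpace ℝ V] [FiniteDimensional ℝ V]
    (μ : Measure G) [μ.IsHaarMeasure] [IsProbabilityMeasure μ]
    (ρ : G →* (V ≃ₗᵢ[ℝ] V)) (hρ : Continuous fun p : G × V => ρ p.1 p.2)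
    (L : Submodule ℝ V)
    (hcompat : (projSub L).comp (projSub (fixedSubmodule ρ)) =
      (projSub (fixedSubmodule ρ)).comp (projSub L))
    (R : V → ℝ) (hR : ContDiff ℝ 2 R)
    (A : V) (hA : A ∈ fixedSubmodule ρ ⊓ L)
    (Y : V) (hY : Y ∈ L ⊓ (fixedSubmodule ρ ⊓ L)ᗮ) :
    projSub L ((hess (augRisk μ ρ R) A) Y) ∈ L ⊓ (fixedSubmodule ρ ⊓ L)ᗮ := by
  obtain ⟨hAG, hAL⟩ := Submodule.mem_inf.mp hA
  obtain ⟨hYL, hYperp⟩ := Submodule.mem_inf.mp hY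
  set K := fixedSubmodule ρ with hK
  set F := augRisk μ ρ R with hF
  set H := hess F A with hH
  -- the Hessian commutes with the group action
  have hcomm : ∀ g v, H (ρ g v) = ρ g (H v) := fun g v =>
    factB_hess_comm F (ρ g) (fun x => factB_augRisk_inv μ ρ R g x) A (hAG g) v
  -- projections to L fix elements of L
  have hprojL : ∀ z ∈ L, projSub L z = z := by
    intro z hz
    exact Submodule.starProjection_eq_self_iff.mpr hz
  -- Y is orthogonal to the whole fixed subspace
  have hYK : Y ∈ Kᗮ := by
    rw [← Submodule.orthogonalProjectionOnto_eq_zero_iff]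
    have hmemL : (projSub K) Y ∈ L := by
      have := congrArg (fun T : V →L[ℝ] V => T Y) hcompat
      simp only [ContinuousLinearMap.comp_apply] at this
      rw [hprojL Y hYL] at this
      rw [← this]
      exact (L.orthogonalProjectionOnto _).2
    have hmemK : (projSub K) Y ∈ K := (K.orthogonalProjectionOnto Y).2
    have hinner : ⟪(projSub K Y : V), Y⟫ = 0 :=
      hYperp _ (Submodule.mem_inf.mpr ⟨hmemK, hmemL⟩)
    have hsub : ⟪(projSub K Y : V), Y - projSub K Y⟫ = 0 := by
      have h1 : Y - projSub K Y ∈ Kᗮ := Submodule.sub_starProjection_mem_orthogonal Y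
      exact (h1 _ hmemK)
    have : ⟪(projSub K Y : V), projSub K Y⟫ = 0 := by
      have := hsub
      rw [inner_sub_right, hinner] at this
      linarith
    have hzero : (projSub K Y : V) = 0 := by
      have := inner_self_eq_zero.mp this
      exact this
    ext
    exact hzero
  -- H Y is orthogonal to K
  have hHYK : ∀ w ∈ K, ⟪w, H Y⟫ = 0 := by
    intro w hw
    have hadj : ContinuousLinearMap.adjoint H w ∈ K := factB_adjoint_fixed ρ H hcomm hw
    calc ⟪w, H Y⟫ = ⟪ContinuousLinearMap.adjoint H w, Y⟫ :=
          (ContinuousLinearMap.adjoint_inner_left H Y w).symm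
      _ = 0 := (Submodule.mem_orthogonal K Y).mp hYK _ hadj
  -- conclude
  apply Submodule.mem_inf.mpr
  constructor
  · exact (L.orthogonalProjectionOnto (H Y)).2
  · rw [Submodule.mem_orthogonal]
    intro u hu
    obtain ⟨huK, huL⟩ := Submodule.mem_inf.mp hu
    have hswap : ⟪u, (projSub L (H Y) : V)⟫ = ⟪(projSub L u : V), H Y⟫ :=
      (Submodule.inner_starProjection_left_eq_right (K := L) u (H Y)).symm
    rw [hswap, hprojL u huL]
    exact hHYK u huK
end
end

section
/- If R : V → ℝ is continuously differentiable, then the augmented risk R^aug is continuously differentiable and its gradient satisfies ∇R^aug(A) = ∫_G ρ(g)⁻¹ ∇R(ρ(g)A) dμ(g) for every A ∈ V, where ρ(g)⁻¹ = ρ(g)^T is the adjoint of the orthogonal map ρ(g). -/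
open MeasureTheory InnerProductSpace RealInnerProductSpace

noncomputable section

private lemma cont_integrable {G : Type*} [TopologicalSpace G] [CompactSpace G]
    [MeasurableSpace G] [BorelSpace G] {E : Type*} [NormedAddCommGroup E]
    (μ : Measure G) [IsFiniteMeasure μ] (f : G → E) (hf : Continuous f) :
    Integrable f μ :=
  hf.integrable_of_hasCompactSupport (isClosed_tsupport f).isCompact

/-- If `R` is continuously differentiable then so is the augmented risk
`R^aug`, and `∇R^aug(A) = ∫_G ρ(g)⁻¹ ∇R(ρ(g)A) dμ(g)`. -/
theorem augRisk_contDiff_and_gradient_formula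
    {G V : Type*} [Group G] [TopologicalSpace G] [IsTopologicalGroup G] [CompactSpace G]
    [MeasurableSpace G] [BorelSpace G]
    [NormedAddCommGroup V] [InnerProductSpace ℝ V] [FiniteDimensional ℝ V]
    (μ : Measure G) [μ.IsHaarMeasure] [IsProbabilityMeasure μ]
    (ρ : G →* (V ≃ₗᵢ[ℝ] V)) (hρ : Continuous fun p : G × V => ρ p.1 p.2)
    (R : V → ℝ) (hR : ContDiff ℝ 1 R) :
    ContDiff ℝ 1 (augRisk μ ρ R) ∧
      ∀ A : V, gradient (augRisk μ ρ R) A =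
        ∫ g, (ρ g).symm (gradient R (ρ g A)) ∂μ := by
  classical
  have hRd : Differentiable ℝ R := hR.differentiable one_ne_zero
  -- continuity of the gradient of R
  have hgrad : Continuous (gradient R) := by
    have h1 : Continuous (fderiv ℝ R) := hR.continuous_fderiv one_ne_zero
    have : (gradient R) = fun x => (toDual ℝ V).symm (fderiv ℝ R x) := rfl
    rw [this]
    exact (toDual ℝ V).symm.continuous.comp h1
  -- `(ρ g).symm = ρ g⁻¹` pointwise
  have hsymm : ∀ (g : G) (x : V), (ρ g).symm x = ρ g⁻¹ x := by
    intro g x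
    rw [map_inv]
    rfl
  -- joint continuity of the integrand for the gradient formula
  set w : V → G → V := fun A g => (ρ g).symm (gradient R (ρ g A)) with hw
  have hwcont : Continuous fun p : G × V => w p.2 p.1 := by
    have : (fun p : G × V => w p.2 p.1)
        = fun p : G × V => ρ p.1⁻¹ (gradient R (ρ p.1 p.2)) := by
      funext p; exact hsymm _ _
    rw [this]
    exact hρ.comp ((continuous_inv.comp continuous_fst).prodMk (hgrad.comp hρ))
  have hwA : ∀ A : V, Continuous fun g => w A g := by
    intro A
    exact hwcont.comp (continuous_id.prodMk continuous_const)
  -- each `x ↦ R (ρ g x)` has the right derivative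
  have hderiv : ∀ (g : G) (x : V),
      HasFDerivAt (fun y => R (ρ g y)) (innerSL ℝ (w x g)) x := by
    intro g x
    have h1 : HasFDerivAt R (fderiv ℝ R (ρ g x)) (ρ g x) := (hRd (ρ g x)).hasFDerivAt
    have h2 : HasFDerivAt (fun y : V => ρ g y)
        ((ρ g).toContinuousLinearEquiv : V →L[ℝ] V) x :=
      ((ρ g).toContinuousLinearEquiv : V →L[ℝ] V).hasFDerivAt
    have h3 := h1.comp x h2
    refine h3.congr_fderiv ?_
    ext v
    have hv : fderiv ℝ R (ρ g x) (ρ g v) = ⟪gradient R (ρ g x), ρ g v⟫ := by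
      rw [show gradient R (ρ g x) = (toDual ℝ V).symm (fderiv ℝ R (ρ g x)) from rfl,
        toDual_symm_apply]
    have hi : ⟪(ρ g).symm (gradient R (ρ g x)), v⟫
        = ⟪gradient R (ρ g x), ρ g v⟫ := by
      conv_rhs => rw [← (ρ g).apply_symm_apply (gradient R (ρ g x))]
      exact ((ρ g).inner_map_map _ _).symm
    simp only [ContinuousLinearMap.coe_comp', Function.comp_apply,
      ContinuousLinearEquiv.coe_coe, LinearIsometryEquiv.coe_toContinuousLinearEquiv,
      innerSL_apply_apply, hw]
    rw [hi, hv]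
  -- bound on the gradient on a neighborhood of any point
  have hbound : ∀ A₀ : V, ∃ C : ℝ, ∀ x ∈ Metric.closedBall A₀ 1, ∀ g : G, ‖w x g‖ ≤ C := by
    intro A₀
    have hK : IsCompact ((fun p : G × V => ρ p.1 p.2) ''
        (Set.univ ×ˢ Metric.closedBall A₀ 1)) :=
      (isCompact_univ.prod (isCompact_closedBall A₀ 1)).image hρ
    obtain ⟨C, hC⟩ := hK.exists_bound_of_continuousOn hgrad.continuousOn
    refine ⟨C, fun x hx g => ?_⟩
    have : ρ g x ∈ (fun p : G × V => ρ p.1 p.2) '' (Set.univ ×ˢ Metric.closedBall A₀ 1) :=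
      ⟨(g, x), ⟨Set.mem_univ _, hx⟩, rfl⟩
    calc ‖w x g‖ = ‖gradient R (ρ g x)‖ := (ρ g).symm.norm_map _
      _ ≤ C := hC _ this
  -- the key derivative statement
  have hkey : ∀ A₀ : V, HasFDerivAt (augRisk μ ρ R)
      ((toDual ℝ V) (∫ g, w A₀ g ∂μ)) A₀ := by
    intro A₀
    obtain ⟨C, hC⟩ := hbound A₀
    have hmain : HasFDerivAt (fun x => ∫ g, R (ρ g x) ∂μ)
        (∫ g, innerSL ℝ (w A₀ g) ∂μ) A₀ := by
      apply hasFDerivAt_integral_of_dominated_of_fderiv_le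
          (𝕜 := ℝ) (F := fun x g => R (ρ g x)) (F' := fun x g => innerSL ℝ (w x g))
          (bound := fun _ => C) (Metric.ball_mem_nhds A₀ one_pos)
      · filter_upwards with x
        exact (Continuous.aestronglyMeasurable
          ((hR.continuous).comp (hρ.comp (continuous_id.prodMk continuous_const))))
      · exact cont_integrable μ _ ((hR.continuous).comp (hρ.comp (continuous_id.prodMk continuous_const)))
      · exact ((innerSL ℝ).continuous.comp (hwA A₀)).aestronglyMeasurable
      · filter_upwards with g
        intro x hx
        rw [innerSL_apply_norm]
        exact hC x (Metric.ball_subset_closedBall hx) g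
      · exact integrable_const C
      · filter_upwards with g
        intro x _
        exact hderiv g x
    have hcomm : (∫ g, innerSL ℝ (w A₀ g) ∂μ) = innerSL ℝ (∫ g, w A₀ g ∂μ) :=
      ContinuousLinearMap.integral_comp_comm (innerSL ℝ) (cont_integrable μ _ (hwA A₀))
    have htd : (toDual ℝ V) (∫ g, w A₀ g ∂μ) = innerSL ℝ (∫ g, w A₀ g ∂μ) := by
      ext v; rw [toDual_apply_apply]; rfl
    rw [htd, ← hcomm]
    exact hmain
  -- gradient formula
  have hgradA : ∀ A : V, gradient (augRisk μ ρ R) A = ∫ g, w A g ∂μ := by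
    intro A
    exact ((hasGradientAt_iff_hasFDerivAt).2 (hkey A)).gradient
  constructor
  · rw [contDiff_one_iff_fderiv]
    refine ⟨fun A => (hkey A).differentiableAt, ?_⟩
    have hfd : (fderiv ℝ (augRisk μ ρ R)) = fun A => (toDual ℝ V) (∫ g, w A g ∂μ) := by
      funext A; exact (hkey A).fderiv
    rw [hfd]
    refine (toDual ℝ V).continuous.comp ?_
    rw [continuous_iff_continuousAt]
    intro A₀
    obtain ⟨C, hC⟩ := hbound A₀
    apply continuousAt_of_dominated (bound := fun _ => C)
    · filter_upwards with x
      exact (hwA x).aestronglyMeasurable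
    · filter_upwards [Metric.closedBall_mem_nhds A₀ one_pos] with x hx
      filter_upwards with g
      exact hC x hx g
    · exact integrable_const C
    · filter_upwards with g
      exact ((hwcont.comp (continuous_const.prodMk continuous_id)).continuousAt)
  · exact hgradA
end
end

section
/- If R : V → ℝ is continuously differentiable, then for every A in the fixed-point subspace H_G one has ∇R^aug(A) = Π_G ∇R(A); that is, at equivariant points the gradient of the augmented risk is the orthogonal projection of the gradient of the nominal risk onto the fixed-point subspace. -/
open MeasureTheory InnerProductSpace RealInnerProductSpace

noncomputable section

/-- If `R` is continuously differentiable then at every point `A` of the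
fixed-point subspace `H_G` one has `∇R^aug(A) = Π_G ∇R(A)`. -/
theorem gradient_augRisk_eq_proj_gradient_on_fixed
    {G V : Type*} [Group G] [TopologicalSpace G] [IsTopologicalGroup G] [CompactSpace G]
    [MeasurableSpace G] [BorelSpace G]
    [NormedAddCommGroup V] [InnerProductSpace ℝ V] [FiniteDimensional ℝ V]
    (μ : Measure G) [μ.IsHaarMeasure] [IsProbabilityMeasure μ]
    (ρ : G →* (V ≃ₗᵢ[ℝ] V)) (hρ : Continuous fun p : G × V => ρ p.1 p.2)
    (R : V → ℝ) (hR : ContDiff ℝ 1 R)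
    (A : V) (hA : A ∈ fixedSubmodule ρ) :
    gradient (augRisk μ ρ R) A = projSub (fixedSubmodule ρ) (gradient R A) := by
  classical
  set K := fixedSubmodule ρ with hKdef
  set w := gradient R A with hwdef
  -- the representation as continuous linear maps
  set φ : G → V →L[ℝ] V := fun g => ((ρ g).toLinearIsometry.toContinuousLinearMap) with hφdef
  have hφ_apply : ∀ g v, φ g v = ρ g v := fun g v => rfl
  have hρ_apply : ∀ (v : V), Continuous fun g => ρ g v := fun v =>
    hρ.comp (continuous_id.prodMk continuous_const)
  have hφ_cont : Continuous φ := continuous_clm_apply.mpr fun v => hρ_apply v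
  have hφ_norm : ∀ g, ‖φ g‖ ≤ 1 := fun g => (ρ g).toLinearIsometry.norm_toContinuousLinearMap_le
  have hRd : Differentiable ℝ R := hR.differentiable one_ne_zero
  have hfd_cont : Continuous (fderiv ℝ R) := hR.continuous_fderiv one_ne_zero
  -- uniform bound on the derivative over a compact neighborhood of the orbit
  obtain ⟨C, hC⟩ : ∃ C, ∀ (g : G) (x : V), x ∈ Metric.closedBall A 1 → ‖fderiv ℝ R (ρ g x)‖ ≤ C := by
    have hS : IsCompact ((fun p : G × V => ρ p.1 p.2) '' (Set.univ ×ˢ Metric.closedBall A 1)) :=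
      (isCompact_univ.prod (isCompact_closedBall A 1)).image hρ
    obtain ⟨C, hC⟩ := hS.exists_bound_of_continuousOn hfd_cont.continuousOn
    exact ⟨C, fun g x hx => hC _ ⟨(g, x), ⟨trivial, hx⟩, rfl⟩⟩
  have hC0 : 0 ≤ C :=
    le_trans (norm_nonneg _) (hC 1 A (Metric.mem_closedBall_self zero_le_one))
  -- differentiation under the integral sign
  have key : HasFDerivAt (augRisk μ ρ R)
      (∫ g, ((fderiv ℝ R ((ρ g) A)).comp (φ g)) ∂μ) A := by
    apply hasFDerivAt_integral_of_dominated_of_fderiv_le (𝕜 := ℝ)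
      (F := fun x g => R (ρ g x)) (F' := fun x g => (fderiv ℝ R (ρ g x)).comp (φ g))
      (bound := fun _ => C) (Metric.ball_mem_nhds A one_pos)
    · exact Filter.Eventually.of_forall fun x =>
        ((hR.continuous.comp (hρ_apply x)).aestronglyMeasurable)
    · exact (hR.continuous.comp (hρ_apply A)).integrable_of_hasCompactSupport
        (HasCompactSupport.of_compactSpace _)
    · exact (Continuous.clm_comp (hfd_cont.comp (hρ_apply A)) hφ_cont).aestronglyMeasurable
    · refine Filter.Eventually.of_forall fun g => fun x hx => ?_
      calc ‖(fderiv ℝ R (ρ g x)).comp (φ g)‖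
          ≤ ‖fderiv ℝ R (ρ g x)‖ * ‖φ g‖ := ContinuousLinearMap.opNorm_comp_le _ _
        _ ≤ C * 1 := mul_le_mul (hC g x (Metric.ball_subset_closedBall hx)) (hφ_norm g)
            (norm_nonneg _) hC0
        _ = C := mul_one C
    · exact integrable_const C
    · refine Filter.Eventually.of_forall fun g => fun x _ => ?_
      exact ((hRd (ρ g x)).hasFDerivAt).comp x (φ g).hasFDerivAt
  -- the fixed-point simplification `ρ g A = A`
  have hρA : ∀ g : G, ρ g A = A := hA
  have key' : HasFDerivAt (augRisk μ ρ R) (∫ g, ((fderiv ℝ R A).comp (φ g)) ∂μ) A := by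
    have : (fun g => (fderiv ℝ R ((ρ g) A)).comp (φ g))
        = fun g => (fderiv ℝ R A).comp (φ g) := by
      funext g; rw [hρA g]
    rwa [this] at key
  -- integrability facts
  have hint_comp : Integrable (fun g => (fderiv ℝ R A).comp (φ g)) μ :=
    (Continuous.clm_comp continuous_const hφ_cont).integrable_of_hasCompactSupport
      (HasCompactSupport.of_compactSpace _)
  have hint_orbit : ∀ v : V, Integrable (fun g => ρ g v) μ := fun v =>
    (hρ_apply v).integrable_of_hasCompactSupport (HasCompactSupport.of_compactSpace _)
  -- the projected gradient
  set p : V := projSub K w with hpdef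
  have hpK : p ∈ K := (K.orthogonalProjectionOnto w).2
  have hsub : ∀ u ∈ K, ⟪u, w - p⟫ = 0 := fun u hu =>
    (Submodule.mem_orthogonal K (w - p)).mp (K.sub_starProjection_mem_orthogonal w)
      u hu
  -- main computation via inner products
  apply ext_inner_right ℝ
  intro v
  have hm_int : Integrable (fun g => ρ g v) μ := hint_orbit v
  set m : V := ∫ g, ρ g v ∂μ with hmdef
  have hmK : m ∈ K := by
    intro h
    have h1 : ρ h m = ∫ g, ρ h (ρ g v) ∂μ :=
      ((ρ h).toLinearIsometry.integral_comp_comm (fun g => ρ g v)).symm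
    have h2 : (fun g => ρ h (ρ g v)) = fun g => ρ (h * g) v := by
      funext g; rw [map_mul]; rfl
    have h3 : ∫ g, ρ (h * g) v ∂μ = ∫ g, ρ g v ∂μ :=
      integral_mul_left_eq_self (fun g => ρ g v) h
    rw [h1, h2, h3]
  calc ⟪gradient (augRisk μ ρ R) A, v⟫
      = (∫ g, ((fderiv ℝ R A).comp (φ g)) ∂μ) v := by
        rw [gradient, key'.fderiv, InnerProductSpace.toDual_symm_apply]
    _ = ∫ g, ((fderiv ℝ R A).comp (φ g)) v ∂μ :=
        ContinuousLinearMap.integral_apply hint_comp v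
    _ = ∫ g, ⟪w, ρ g v⟫ ∂μ := by
        refine integral_congr_ae (Filter.Eventually.of_forall fun g => ?_)
        simp only [hwdef, gradient, InnerProductSpace.toDual_symm_apply]
        rfl
    _ = ⟪w, m⟫ := integral_inner hm_int w
    _ = ⟪p, m⟫ + ⟪w - p, m⟫ := by rw [← inner_add_left]; congr 1; abel
    _ = ⟪p, m⟫ := by
        have h0 : ⟪w - p, m⟫ = 0 := by rw [real_inner_comm]; exact hsub m hmK
        rw [h0, add_zero]
    _ = ∫ g, ⟪p, ρ g v⟫ ∂μ := (integral_inner hm_int p).symm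
    _ = ∫ _g, ⟪p, v⟫ ∂μ := by
        refine integral_congr_ae (Filter.Eventually.of_forall fun g => ?_)
        conv_lhs => rw [← hpK g]
        exact (ρ g).inner_map_map p v
    _ = ⟪p, v⟫ := by simp
end
end

section
/- Assume L is invariant under the representation (ρ(g)(L) ⊆ L for all g ∈ G) and R is twice continuously differentiable. If σ̄ ∈ ℝ satisfies ⟨R''(A) Y, Y⟩ ≥ σ̄ ‖Y‖² for every A ∈ E and every Y ∈ TE^⊥, then also ⟨(R^aug)''(A) Y, Y⟩ ≥ σ̄ ‖Y‖² for every A ∈ E and every Y ∈ TE^⊥; that is, the Hessian lower bound on TE^⊥ for the nominal risk transfers to the augmented risk at equivariant points. -/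
open MeasureTheory InnerProductSpace RealInnerProductSpace Metric

noncomputable section

/-- A continuous function on a compact space is integrable w.r.t. a finite measure. -/
lemma continuous_integrable_aux {G E : Type*} [TopologicalSpace G] [CompactSpace G]
    [MeasurableSpace G] [OpensMeasurableSpace G] [NormedAddCommGroup E]
    (μ : Measure G) [IsFiniteMeasure μ] {f : G → E} (hf : Continuous f) :
    Integrable f μ :=
  hf.integrable_of_hasCompactSupport (HasCompactSupport.of_compactSpace f)

/-- If `L` is invariant under the representation and
`⟪R''(A)Y, Y⟫ ≥ σ̄‖Y‖²` for all `A ∈ E`, `Y ∈ TEᗮ`, then also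
`⟪(R^aug)''(A)Y, Y⟫ ≥ σ̄‖Y‖²` for all `A ∈ E`, `Y ∈ TEᗮ`. -/
theorem hessian_lower_bound_transfers
    {G V : Type*} [Group G] [TopologicalSpace G] [IsTopologicalGroup G] [CompactSpace G]
    [MeasurableSpace G] [BorelSpace G]
    [NormedAddCommGroup V] [InnerProductSpace ℝ V] [FiniteDimensional ℝ V]
    (μ : Measure G) [μ.IsHaarMeasure] [IsProbabilityMeasure μ]
    (ρ : G →* (V ≃ₗᵢ[ℝ] V)) (hρ : Continuous fun p : G × V => ρ p.1 p.2)
    (L : Submodule ℝ V)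
    (hL : ∀ (g : G), ∀ v ∈ L, ρ g v ∈ L)
    (R : V → ℝ) (hR : ContDiff ℝ 2 R)
    (σbar : ℝ)
    (hσbar : ∀ A ∈ fixedSubmodule ρ ⊓ L, ∀ Y ∈ L ⊓ (fixedSubmodule ρ ⊓ L)ᗮ,
      σbar * ‖Y‖ ^ 2 ≤ ⟪(hess R A) Y, Y⟫_ℝ) :
    ∀ A ∈ fixedSubmodule ρ ⊓ L, ∀ Y ∈ L ⊓ (fixedSubmodule ρ ⊓ L)ᗮ,
      σbar * ‖Y‖ ^ 2 ≤ ⟪(hess (augRisk μ ρ R) A) Y, Y⟫_ℝ := by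
  classical
  intro A hA Y hY
  -- basic facts about R
  have hdiffR : Differentiable ℝ R := (hR.of_le one_le_two).differentiable one_ne_zero
  have hfR : ContDiff ℝ 1 (fderiv ℝ R) := hR.fderiv_right (by norm_num)
  have hfRc : Continuous (fderiv ℝ R) := hfR.continuous
  have hgradR : ContDiff ℝ 1 (gradient R) :=
    (((toDual ℝ V).symm : (V →L[ℝ] ℝ) ≃ₗᵢ[ℝ] V).contDiff).comp hfR
  have hgrad_diff : Differentiable ℝ (gradient R) := hgradR.differentiable one_ne_zero
  have hgradc : Continuous (gradient R) := hgradR.continuous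
  have hhessc : Continuous (fun x => fderiv ℝ (gradient R) x) :=
    (hgradR.fderiv_right (m := 0) (by norm_num)).continuous
  -- the representation as continuous linear maps
  set cl : G → V →L[ℝ] V := fun g => ((ρ g).toContinuousLinearEquiv : V →L[ℝ] V) with hcl_def
  have hcl : ∀ g v, cl g v = ρ g v := fun g v => rfl
  have hcl_norm : ∀ g, ‖cl g‖ ≤ 1 := fun g =>
    ContinuousLinearMap.opNorm_le_bound _ zero_le_one (by simp [hcl])
  have hUinv : ∀ (g : G) (w : V), ρ g (ρ g⁻¹ w) = w := by
    intro g w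
    have h : (ρ g) * (ρ g⁻¹) = 1 := by rw [← map_mul, mul_inv_cancel, map_one]
    calc ρ g (ρ g⁻¹ w) = ((ρ g) * (ρ g⁻¹)) w := rfl
      _ = w := by rw [h]; rfl
  have hadj : ∀ (g : G) (w v : V), ⟪ρ g⁻¹ w, v⟫_ℝ = ⟪w, ρ g v⟫_ℝ := by
    intro g w v
    conv_rhs => rw [← hUinv g w]
    exact ((ρ g).inner_map_map (ρ g⁻¹ w) v).symm
  -- continuity in g
  have hact : ∀ v : V, Continuous fun g : G => ρ g v := fun v =>
    hρ.comp (continuous_id.prodMk continuous_const)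
  have hact2 : ∀ {w : G → V}, Continuous w → Continuous fun g : G => ρ g (w g) :=
    fun hw => hρ.comp (continuous_id.prodMk hw)
  have hact3 : ∀ {w : G → V}, Continuous w → Continuous fun g : G => ρ g⁻¹ (w g) :=
    fun hw => hρ.comp (continuous_inv.prodMk hw)
  -- first derivative data
  set D1 : G → V → (V →L[ℝ] ℝ) := fun g x => (fderiv ℝ R (ρ g x)).comp (cl g) with hD1_def
  have hD1 : ∀ (g : G) (x : V), HasFDerivAt (fun y => R (ρ g y)) (D1 g x) x := by
    intro g x
    exact ((hdiffR (ρ g x)).hasFDerivAt).comp x ((cl g).hasFDerivAt)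
  have hD1c : ∀ x : V, Continuous fun g => D1 g x := by
    intro x
    rw [continuous_clm_apply]
    intro v
    have : Continuous fun g : G => (fderiv ℝ R (ρ g x)) (ρ g v) :=
      isBoundedBilinearMap_apply.continuous.comp
        ((hfRc.comp (hact x)).prodMk (hact v))
    simpa [hD1_def, hcl] using this
  have hD1int : ∀ x : V, Integrable (fun g => D1 g x) μ :=
    fun x => continuous_integrable_aux μ (hD1c x)
  -- the candidate gradient field
  set Ψ : V → G → V := fun x g => ρ g⁻¹ (gradient R (ρ g x)) with hΨ_def
  have hΨc : ∀ x : V, Continuous (Ψ x) := by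
    intro x
    exact hact3 (hgradc.comp (hact x))
  have hΨint : ∀ x : V, Integrable (Ψ x) μ := fun x => continuous_integrable_aux μ (hΨc x)
  -- step 1 : derivative of the augmented risk
  have step1 : ∀ x₀ : V, HasFDerivAt (augRisk μ ρ R) (∫ g, D1 g x₀ ∂μ) x₀ := by
    intro x₀
    set s : Set V := (fun p : G × V => ρ p.1 p.2) '' (Set.univ ×ˢ closedBall x₀ 1) with hs_def
    have hs : IsCompact s :=
      (isCompact_univ.prod (isCompact_closedBall x₀ 1)).image hρ
    obtain ⟨C, hC⟩ := hs.exists_bound_of_continuousOn hfRc.continuousOn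
    have hmem : ∀ (g : G) (x : V), x ∈ ball x₀ 1 → ρ g x ∈ s := by
      intro g x hx
      exact ⟨(g, x), ⟨Set.mem_univ _, ball_subset_closedBall hx⟩, rfl⟩
    refine hasFDerivAt_integral_of_dominated_of_fderiv_le (F := fun x g => R (ρ g x))
      (F' := fun x g => D1 g x) (bound := fun _ => C) (ball_mem_nhds x₀ one_pos) ?_ ?_ ?_ ?_ ?_ ?_
    · exact Filter.Eventually.of_forall fun x =>
        ((hR.continuous.comp (hact x)).aestronglyMeasurable)
    · exact continuous_integrable_aux μ (hR.continuous.comp (hact x₀))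
    · exact (hD1c x₀).aestronglyMeasurable
    · refine Filter.Eventually.of_forall fun g => fun x hx => ?_
      calc ‖D1 g x‖ ≤ ‖fderiv ℝ R (ρ g x)‖ * ‖cl g‖ := ContinuousLinearMap.opNorm_comp_le _ _
        _ ≤ C * 1 := by
            refine mul_le_mul (hC _ (hmem g x hx)) (hcl_norm g) (norm_nonneg _) ?_
            exact le_trans (norm_nonneg _) (hC _ (hmem 1 x₀ (mem_ball_self one_pos)))
        _ = C := mul_one C
    · exact integrable_const C
    · exact Filter.Eventually.of_forall fun g => fun x _ => hD1 g x
  -- identify the gradient of the augmented risk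
  have hgrad_aug : ∀ x : V, gradient (augRisk μ ρ R) x = ∫ g, Ψ x g ∂μ := by
    intro x
    have key : (toDual ℝ V) (∫ g, Ψ x g ∂μ) = ∫ g, D1 g x ∂μ := by
      apply ContinuousLinearMap.ext
      intro v
      rw [ContinuousLinearMap.integral_apply (hD1int x) v]
      have lhs : (toDual ℝ V) (∫ g, Ψ x g ∂μ) v = ∫ g, ⟪v, Ψ x g⟫_ℝ ∂μ := by
        rw [toDual_apply_apply, real_inner_comm, ← integral_inner (hΨint x) v]
      rw [lhs]
      refine integral_congr_ae (Filter.Eventually.of_forall fun g => ?_)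
      have h1 : D1 g x v = ⟪gradient R (ρ g x), ρ g v⟫_ℝ := by
        have : (toDual ℝ V) (gradient R (ρ g x)) = fderiv ℝ R (ρ g x) :=
          (toDual ℝ V).apply_symm_apply _
        show fderiv ℝ R (ρ g x) (ρ g v) = _
        rw [← this, toDual_apply_apply]
      show ⟪v, Ψ x g⟫_ℝ = (D1 g x) v
      rw [h1, real_inner_comm]
      exact hadj g (gradient R (ρ g x)) v
    rw [gradient, (step1 x).fderiv, ← key, LinearIsometryEquiv.symm_apply_apply]
  -- second derivative data
  set D2 : G → V → (V →L[ℝ] V) := fun g x =>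
    (cl g⁻¹).comp ((fderiv ℝ (gradient R) (ρ g x)).comp (cl g)) with hD2_def
  have hD2 : ∀ (g : G) (x : V), HasFDerivAt (fun y => Ψ y g) (D2 g x) x := by
    intro g x
    exact (cl g⁻¹).hasFDerivAt.comp x
      (((hgrad_diff (ρ g x)).hasFDerivAt).comp x ((cl g).hasFDerivAt))
  have hD2c : ∀ x : V, Continuous fun g => D2 g x := by
    intro x
    rw [continuous_clm_apply]
    intro v
    have h1 : Continuous fun g : G => (fderiv ℝ (gradient R) (ρ g x)) (ρ g v) :=
      isBoundedBilinearMap_apply.continuous.comp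
        ((hhessc.comp (hact x)).prodMk (hact v))
    have : Continuous fun g : G => ρ g⁻¹ ((fderiv ℝ (gradient R) (ρ g x)) (ρ g v)) :=
      hact3 h1
    simpa [hD2_def, hcl] using this
  have hD2int : ∀ x : V, Integrable (fun g => D2 g x) μ :=
    fun x => continuous_integrable_aux μ (hD2c x)
  -- step 2 : the Hessian of the augmented risk at A
  have step2 : HasFDerivAt (fun x => ∫ g, Ψ x g ∂μ) (∫ g, D2 g A ∂μ) A := by
    set s : Set V := (fun p : G × V => ρ p.1 p.2) '' (Set.univ ×ˢ closedBall A 1) with hs_def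
    have hs : IsCompact s :=
      (isCompact_univ.prod (isCompact_closedBall A 1)).image hρ
    obtain ⟨C, hC⟩ := hs.exists_bound_of_continuousOn hhessc.continuousOn
    have hmem : ∀ (g : G) (x : V), x ∈ ball A 1 → ρ g x ∈ s := by
      intro g x hx
      exact ⟨(g, x), ⟨Set.mem_univ _, ball_subset_closedBall hx⟩, rfl⟩
    have hCnn : 0 ≤ C := le_trans (norm_nonneg _) (hC _ (hmem 1 A (mem_ball_self one_pos)))
    refine hasFDerivAt_integral_of_dominated_of_fderiv_le (F := fun x g => Ψ x g)
      (F' := fun x g => D2 g x) (bound := fun _ => C) (ball_mem_nhds A one_pos) ?_ ?_ ?_ ?_ ?_ ?_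
    · exact Filter.Eventually.of_forall fun x => (hΨc x).aestronglyMeasurable
    · exact hΨint A
    · exact (hD2c A).aestronglyMeasurable
    · refine Filter.Eventually.of_forall fun g => fun x hx => ?_
      calc ‖D2 g x‖
          ≤ ‖cl g⁻¹‖ * ‖(fderiv ℝ (gradient R) (ρ g x)).comp (cl g)‖ :=
            ContinuousLinearMap.opNorm_comp_le _ _
        _ ≤ 1 * (C * 1) := by
            refine mul_le_mul (hcl_norm g⁻¹) ?_ (norm_nonneg _) zero_le_one
            calc ‖(fderiv ℝ (gradient R) (ρ g x)).comp (cl g)‖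
                ≤ ‖fderiv ℝ (gradient R) (ρ g x)‖ * ‖cl g‖ :=
                  ContinuousLinearMap.opNorm_comp_le _ _
              _ ≤ C * 1 := mul_le_mul (hC _ (hmem g x hx)) (hcl_norm g) (norm_nonneg _) hCnn
        _ = C := by ring
    · exact integrable_const C
    · exact Filter.Eventually.of_forall fun g => fun x _ => hD2 g x
  have hhess_aug : hess (augRisk μ ρ R) A = ∫ g, D2 g A ∂μ := by
    have : gradient (augRisk μ ρ R) = fun x => ∫ g, Ψ x g ∂μ := funext hgrad_aug
    rw [hess, this]
    exact step2.fderiv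
  -- facts about A and Y
  have hAfix : ∀ g : G, ρ g A = A := hA.1
  have hYL : Y ∈ L := hY.1
  have hYorth : Y ∈ (fixedSubmodule ρ ⊓ L)ᗮ := hY.2
  have hYg : ∀ g : G, ρ g Y ∈ L ⊓ (fixedSubmodule ρ ⊓ L)ᗮ := by
    intro g
    refine ⟨hL g Y hYL, ?_⟩
    intro w hw
    have hwfix : ρ g w = w := hw.1 g
    calc ⟪w, ρ g Y⟫_ℝ = ⟪ρ g w, ρ g Y⟫_ℝ := by rw [hwfix]
      _ = ⟪w, Y⟫_ℝ := (ρ g).inner_map_map w Y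
      _ = 0 := hYorth w hw
  -- the key pointwise computation
  have hpt : ∀ g : G, ⟪(D2 g A) Y, Y⟫_ℝ = ⟪(hess R A) (ρ g Y), ρ g Y⟫_ℝ := by
    intro g
    have h1 : (D2 g A) Y = ρ g⁻¹ ((fderiv ℝ (gradient R) A) (ρ g Y)) := by
      simp [hD2_def, hcl, hAfix g]
    rw [h1, hadj g _ Y]
    rfl
  -- integrate
  have hint1 : Integrable (fun g => ⟪(D2 g A) Y, Y⟫_ℝ) μ := by
    refine continuous_integrable_aux μ ?_
    have : Continuous fun g : G => (D2 g A) Y :=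
      isBoundedBilinearMap_apply.continuous.comp ((hD2c A).prodMk continuous_const)
    exact (continuous_inner.comp (this.prodMk continuous_const))
  have hineq : ∀ g : G, σbar * ‖Y‖ ^ 2 ≤ ⟪(D2 g A) Y, Y⟫_ℝ := by
    intro g
    rw [hpt g]
    have := hσbar A hA (ρ g Y) (hYg g)
    rwa [(ρ g).norm_map Y] at this
  have hfinal : σbar * ‖Y‖ ^ 2 ≤ ∫ g, ⟪(D2 g A) Y, Y⟫_ℝ ∂μ := by
    have h0 : σbar * ‖Y‖ ^ 2 = ∫ _ : G, σbar * ‖Y‖ ^ 2 ∂μ := by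
      simp [measure_univ]
    rw [h0]
    exact integral_mono (integrable_const _) hint1 hineq
  have heval : ⟪(hess (augRisk μ ρ R) A) Y, Y⟫_ℝ = ∫ g, ⟪(D2 g A) Y, Y⟫_ℝ ∂μ := by
    rw [hhess_aug, ContinuousLinearMap.integral_apply (hD2int A) Y]
    have hintvec : Integrable (fun g => (D2 g A) Y) μ := by
      refine continuous_integrable_aux μ ?_
      exact isBoundedBilinearMap_apply.continuous.comp ((hD2c A).prodMk continuous_const)
    rw [real_inner_comm, ← integral_inner hintvec Y]
    refine integral_congr_ae (Filter.Eventually.of_forall fun g => ?_)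
    exact real_inner_comm _ _
  rw [heval]
  exact hfinal
end
end
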